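/- Let p(z) = Σ_{j=0}^n a_j z^j be a complex polynomial of degree n that is at least a trinomial, let k be the smallest positive integer with a_{n-k} ≠ 0, and suppose k is also the smallest positive integer ℓ with a_{n-k-ℓ} ≠ 0 (i.e., ℓ = k, so a_{n-2k} ≠ 0). Define q_3(z) = (a_n z^{2k} − a_{n-k} z^k − a_{n-2k} + a_{n-k}^2 / a_n) p(z). Then ρ[q_3] ≤ ρ[p]. -/

import Mathlib

open Polynomial
open Finset

/-- The function whose unique positive root is the Cauchy radius of `q`. -/
noncomputable def cauchyFun (q : Polynomial ℂ) (x : ℝ) : ℝ :=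
  ‖q.leadingCoeff‖ * x ^ q.natDegree
    - ∑ j ∈ Finset.range q.natDegree, ‖q.coeff j‖ * x ^ j

/-- Case `ℓ = k`: for the multiplier `aₙ z^{2k} - a_{n-k} z^k - a_{n-2k} + a_{n-k}²/aₙ`,
the Cauchy radius of `q₃` is at most that of `p`. -/
private lemma key_mono (L : ℝ) (c : ℕ → ℝ) (N : ℕ) (hL : 0 < L) (hc : ∀ j, 0 ≤ c j)
    (x y : ℝ) (hx : 0 < x) (hy : 0 < y)
    (hxe : L * x ^ N = ∑ j ∈ range N, c j * x ^ j)
    (hye : ∑ j ∈ range N, c j * y ^ j ≤ L * y ^ N) : x ≤ y := by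
  by_contra hlt
  push_neg at hlt
  have hyx : y ≤ x := hlt.le
  have hterm : ∀ j ∈ range N, c j * x ^ j * y ^ (N - 1) ≤ c j * y ^ j * x ^ (N - 1) := by
    intro j hj
    rw [mem_range] at hj
    have h1 : x ^ j * y ^ (N - 1) ≤ y ^ j * x ^ (N - 1) := by
      have e1 : y ^ (N - 1) = y ^ (N - 1 - j) * y ^ j := by
        rw [← pow_add]; congr 1; omega
      have e2 : x ^ (N - 1) = x ^ (N - 1 - j) * x ^ j := by
        rw [← pow_add]; congr 1; omega
      rw [e1, e2]
      calc x ^ j * (y ^ (N - 1 - j) * y ^ j) = (x ^ j * y ^ j) * y ^ (N - 1 - j) := by ring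
        _ ≤ (x ^ j * y ^ j) * x ^ (N - 1 - j) := by
            apply mul_le_mul_of_nonneg_left (pow_le_pow_left₀ hy.le hyx _) (by positivity)
        _ = y ^ j * (x ^ (N - 1 - j) * x ^ j) := by ring
    calc c j * x ^ j * y ^ (N - 1) = c j * (x ^ j * y ^ (N - 1)) := by ring
      _ ≤ c j * (y ^ j * x ^ (N - 1)) := mul_le_mul_of_nonneg_left h1 (hc j)
      _ = c j * y ^ j * x ^ (N - 1) := by ring
  have hNpos : 0 < N := by
    rcases Nat.eq_zero_or_pos N with h | h
    · subst h
      simp at hxe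
      nlinarith [pow_pos hx 0]
    · exact h
  have hsum : (∑ j ∈ range N, c j * x ^ j) * y ^ (N - 1)
      ≤ (∑ j ∈ range N, c j * y ^ j) * x ^ (N - 1) := by
    rw [sum_mul, sum_mul]
    exact Finset.sum_le_sum hterm
  have h2 : L * x ^ N * y ^ (N - 1) ≤ L * y ^ N * x ^ (N - 1) := by
    rw [hxe]
    calc (∑ j ∈ range N, c j * x ^ j) * y ^ (N - 1)
        ≤ (∑ j ∈ range N, c j * y ^ j) * x ^ (N - 1) := hsum
      _ ≤ L * y ^ N * x ^ (N - 1) := by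
          apply mul_le_mul_of_nonneg_right hye (by positivity)
  have eN : ∀ z : ℝ, z ^ N = z * z ^ (N - 1) := by
    intro z; conv_lhs => rw [show N = 1 + (N - 1) by omega]
    rw [pow_add, pow_one]
  rw [eN x, eN y] at h2
  have hprod : 0 < L * x ^ (N - 1) * y ^ (N - 1) := by positivity
  nlinarith [mul_pos hprod (sub_pos.mpr hlt)]

theorem improved_cauchy_radius_q3
    (p : Polynomial ℂ) (n : ℕ) (hp : p ≠ 0) (hn : p.natDegree = n)
    (k : ℕ) (hk : 0 < k) (hkl : 2 * k ≤ n)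
    (hknz : p.coeff (n - k) ≠ 0)
    (hkmin : ∀ j, 0 < j → j < k → p.coeff (n - j) = 0)
    (hlnz : p.coeff (n - 2 * k) ≠ 0)
    (hlmin : ∀ j, 0 < j → j < k → p.coeff (n - k - j) = 0)
    (x y : ℝ) (hx : 0 < x) (hy : 0 < y)
    (hxroot : cauchyFun
      ((C (p.coeff n) * X ^ (2 * k) - C (p.coeff (n - k)) * X ^ k
          - C (p.coeff (n - 2 * k)) + C (p.coeff (n - k) ^ 2 / p.coeff n)) * p) x = 0)
    (hyroot : cauchyFun p y = 0) :
    x ≤ y := by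
  have hannz : p.coeff n ≠ 0 := by
    rw [← hn]; exact leadingCoeff_ne_zero.mpr hp
  set q : Polynomial ℂ := (C (p.coeff n) * X ^ (2 * k) - C (p.coeff (n - k)) * X ^ k
          - C (p.coeff (n - 2 * k)) + C (p.coeff (n - k) ^ 2 / p.coeff n)) * p with hqdef
  have hqrep : q = C (p.coeff n) * (p * X ^ (2 * k)) - C (p.coeff (n - k)) * (p * X ^ k)
      + C (p.coeff (n - k) ^ 2 / p.coeff n - p.coeff (n - 2 * k)) * p := by
    rw [hqdef, map_sub]; ring
  have hq : ∀ j, q.coeff j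
      = p.coeff n * (if 2 * k ≤ j then p.coeff (j - 2 * k) else 0)
      - p.coeff (n - k) * (if k ≤ j then p.coeff (j - k) else 0)
      + (p.coeff (n - k) ^ 2 / p.coeff n - p.coeff (n - 2 * k)) * p.coeff j := by
    intro j
    rw [hqrep]
    simp [coeff_add, coeff_sub, coeff_C_mul, coeff_mul_X_pow', sub_mul]
  have hz : ∀ j, n < j → p.coeff j = 0 := by
    intro j hj; exact coeff_eq_zero_of_natDegree_lt (by rw [hn]; exact hj)
  have hlead : q.coeff (n + 2 * k) = p.coeff n * p.coeff n := by
    rw [hq, if_pos (by omega), if_pos (by omega), show n + 2 * k - 2 * k = n from by omega,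
      show n + 2 * k - k = n + k from by omega, hz (n + k) (by omega),
      hz (n + 2 * k) (by omega)]
    ring
  have hqdeg : q.natDegree = n + 2 * k := by
    apply le_antisymm
    · rw [natDegree_le_iff_coeff_eq_zero]
      intro j hj
      rw [hq, if_pos (by omega), if_pos (by omega), hz (j - 2 * k) (by omega),
        hz (j - k) (by omega), hz j (by omega)]
      ring
    · apply le_natDegree_of_ne_zero
      rw [hlead]
      exact mul_ne_zero hannz hannz
  have hmid : ∀ j, n ≤ j → j < n + 2 * k → q.coeff j = 0 := by
    intro j hj1 hj2
    obtain ⟨i, rfl⟩ : ∃ i, j = n + i := ⟨j - n, by omega⟩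
    have hi : i < 2 * k := by omega
    rw [hq, if_pos (by omega), if_pos (by omega)]
    rcases lt_trichotomy i k with hik | hik | hik
    · rcases Nat.eq_zero_or_pos i with rfl | hi0
      · rw [show n + 0 - 2 * k = n - 2 * k from by omega,
          show n + 0 - k = n - k from by omega, show n + 0 = n from by omega]
        field_simp
        ring
      · rw [show n + i - 2 * k = n - k - (k - i) from by omega,
          show n + i - k = n - (k - i) from by omega,
          hlmin (k - i) (by omega) (by omega), hkmin (k - i) (by omega) (by omega),
          hz (n + i) (by omega)]
        ring
    · rw [show n + i - 2 * k = n - k from by omega,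
        show n + i - k = n from by omega, hz (n + i) (by omega)]
      ring
    · rw [show n + i - 2 * k = n - (2 * k - i) from by omega,
        hkmin (2 * k - i) (by omega) (by omega), hz (n + i - k) (by omega),
        hz (n + i) (by omega)]
      ring
  have hqlead : q.leadingCoeff = p.coeff n * p.coeff n := by
    rw [leadingCoeff, hqdeg, hlead]
  -- abbreviations (real)
  set An := ‖(p.coeff n)‖ with hAn
  set Ak := ‖(p.coeff (n - k))‖ with hAk
  set A2 := ‖(p.coeff (n - 2 * k))‖ with hA2
  set Bt := ‖(p.coeff (n - k) ^ 2 / p.coeff n - p.coeff (n - 2 * k))‖ with hBtdef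
  have hAnpos : 0 < An := by rw [hAn]; exact norm_pos_iff.mpr hannz
  -- the root equation for p
  simp only [cauchyFun, hn] at hyroot
  rw [leadingCoeff, hn] at hyroot
  have hS : ∑ j ∈ range n, ‖(p.coeff j)‖ * y ^ j = An * y ^ n := by linarith
  -- sum for q reduces to range n
  have hsplit : ∑ j ∈ range (n + 2 * k), ‖(q.coeff j)‖ * y ^ j
      = ∑ j ∈ range n, ‖(q.coeff j)‖ * y ^ j := by
    rw [range_eq_Ico, ← Finset.sum_Ico_consecutive _ (Nat.zero_le n)
      (by omega : n ≤ n + 2 * k), ← range_eq_Ico]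
    have h0 : ∑ j ∈ Finset.Ico n (n + 2 * k), ‖(q.coeff j)‖ * y ^ j = 0 := by
      apply Finset.sum_eq_zero
      intro j hj
      rw [Finset.mem_Ico] at hj
      rw [hmid j hj.1 hj.2]
      simp
    rw [h0, add_zero]
  -- termwise triangle inequality
  have habs : ∀ j, ‖(q.coeff j)‖
      ≤ An * (if 2 * k ≤ j then ‖(p.coeff (j - 2 * k))‖ else 0)
      + Ak * (if k ≤ j then ‖(p.coeff (j - k))‖ else 0)
      + Bt * ‖(p.coeff j)‖ := by
    intro j
    rw [hq]
    have h1 := norm_add_le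
      (p.coeff n * (if 2 * k ≤ j then p.coeff (j - 2 * k) else 0)
        - p.coeff (n - k) * (if k ≤ j then p.coeff (j - k) else 0))
      ((p.coeff (n - k) ^ 2 / p.coeff n - p.coeff (n - 2 * k)) * p.coeff j)
    have h2 := norm_sub_le
      (p.coeff n * (if 2 * k ≤ j then p.coeff (j - 2 * k) else 0))
      (p.coeff (n - k) * (if k ≤ j then p.coeff (j - k) else 0))
    have e1 : ‖(p.coeff n * (if 2 * k ≤ j then p.coeff (j - 2 * k) else 0))‖
        = An * (if 2 * k ≤ j then ‖(p.coeff (j - 2 * k))‖ else 0) := by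
      rw [norm_mul]; congr 1; split_ifs <;> simp
    have e2 : ‖(p.coeff (n - k) * (if k ≤ j then p.coeff (j - k) else 0))‖
        = Ak * (if k ≤ j then ‖(p.coeff (j - k))‖ else 0) := by
      rw [norm_mul]; congr 1; split_ifs <;> simp
    have e3 : ‖((p.coeff (n - k) ^ 2 / p.coeff n - p.coeff (n - 2 * k)) * p.coeff j)‖
        = Bt * ‖(p.coeff j)‖ := norm_mul _ _
    rw [e1, e2] at h2
    rw [e3] at h1
    linarith
  -- sum bound
  have hbound : ∑ j ∈ range n, ‖(q.coeff j)‖ * y ^ j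
      ≤ An * ∑ j ∈ range n, (if 2 * k ≤ j then ‖(p.coeff (j - 2 * k))‖ else 0) * y ^ j
      + Ak * ∑ j ∈ range n, (if k ≤ j then ‖(p.coeff (j - k))‖ else 0) * y ^ j
      + Bt * ∑ j ∈ range n, ‖(p.coeff j)‖ * y ^ j := by
    rw [Finset.mul_sum, Finset.mul_sum, Finset.mul_sum, ← Finset.sum_add_distrib,
      ← Finset.sum_add_distrib]
    apply Finset.sum_le_sum
    intro j hj
    have h := mul_le_mul_of_nonneg_right (habs j) (pow_nonneg hy.le j)
    calc ‖(q.coeff j)‖ * y ^ j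
        ≤ (An * (if 2 * k ≤ j then ‖(p.coeff (j - 2 * k))‖ else 0)
          + Ak * (if k ≤ j then ‖(p.coeff (j - k))‖ else 0)
          + Bt * ‖(p.coeff j)‖) * y ^ j := h
      _ = An * ((if 2 * k ≤ j then ‖(p.coeff (j - 2 * k))‖ else 0) * y ^ j)
          + Ak * ((if k ≤ j then ‖(p.coeff (j - k))‖ else 0) * y ^ j)
          + Bt * (‖(p.coeff j)‖ * y ^ j) := by ring
  -- reindexing
  have hre2 : ∑ j ∈ range n, (if 2 * k ≤ j then ‖(p.coeff (j - 2 * k))‖ else 0) * y ^ j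
      = y ^ (2 * k) * ∑ i ∈ range (n - 2 * k), ‖(p.coeff i)‖ * y ^ i := by
    rw [range_eq_Ico, ← Finset.sum_Ico_consecutive _ (Nat.zero_le (2 * k)) hkl]
    have h0 : ∑ j ∈ Finset.Ico 0 (2 * k),
        (if 2 * k ≤ j then ‖(p.coeff (j - 2 * k))‖ else 0) * y ^ j = 0 := by
      apply Finset.sum_eq_zero
      intro j hj
      rw [Finset.mem_Ico] at hj
      rw [if_neg (by omega)]
      ring
    rw [h0, zero_add, Finset.sum_Ico_eq_sum_range, Finset.mul_sum]
    apply Finset.sum_congr rfl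
    intro i hi
    rw [if_pos (by omega), show 2 * k + i - 2 * k = i from by omega, pow_add]
    ring
  have hre1 : ∑ j ∈ range n, (if k ≤ j then ‖(p.coeff (j - k))‖ else 0) * y ^ j
      = y ^ k * ∑ i ∈ range (n - k), ‖(p.coeff i)‖ * y ^ i := by
    rw [range_eq_Ico, ← Finset.sum_Ico_consecutive _ (Nat.zero_le k) (by omega : k ≤ n)]
    have h0 : ∑ j ∈ Finset.Ico 0 k,
        (if k ≤ j then ‖(p.coeff (j - k))‖ else 0) * y ^ j = 0 := by
      apply Finset.sum_eq_zero
      intro j hj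
      rw [Finset.mem_Ico] at hj
      rw [if_neg (by omega)]
      ring
    rw [h0, zero_add, Finset.sum_Ico_eq_sum_range, Finset.mul_sum]
    apply Finset.sum_congr rfl
    intro i hi
    rw [if_pos (by omega), show k + i - k = i from by omega, pow_add]
    ring
  -- partial sums bounded by full sum
  have hD2 : (∑ i ∈ range (n - 2 * k), ‖(p.coeff i)‖ * y ^ i)
      + Ak * y ^ (n - k) + A2 * y ^ (n - 2 * k) ≤ An * y ^ n := by
    have hsub : insert (n - k) (insert (n - 2 * k) (range (n - 2 * k))) ⊆ range n := by
      intro t ht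
      simp only [Finset.mem_insert, Finset.mem_range] at ht ⊢
      omega
    have hmono := Finset.sum_le_sum_of_subset_of_nonneg hsub
      (fun i _ _ => by positivity : ∀ i ∈ range n,
        i ∉ insert (n - k) (insert (n - 2 * k) (range (n - 2 * k))) →
        0 ≤ ‖(p.coeff i)‖ * y ^ i)
    rw [Finset.sum_insert (by
        simp only [Finset.mem_insert, Finset.mem_range]
        omega),
      Finset.sum_insert (by simp only [Finset.mem_range]; omega), hS] at hmono
    linarith
  have hD1 : (∑ i ∈ range (n - k), ‖(p.coeff i)‖ * y ^ i)
      + Ak * y ^ (n - k) ≤ An * y ^ n := by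
    have hsub : insert (n - k) (range (n - k)) ⊆ range n := by
      intro t ht
      simp only [Finset.mem_insert, Finset.mem_range] at ht ⊢
      omega
    have hmono := Finset.sum_le_sum_of_subset_of_nonneg hsub
      (fun i _ _ => by positivity : ∀ i ∈ range n,
        i ∉ insert (n - k) (range (n - k)) → 0 ≤ ‖(p.coeff i)‖ * y ^ i)
    rw [Finset.sum_insert (by simp only [Finset.mem_range]; omega), hS] at hmono
    linarith
  -- triangle inequality for the constant coefficient of the multiplier
  have hBt : Bt * An ≤ Ak ^ 2 + A2 * An := by
    have e : (p.coeff (n - k) ^ 2 / p.coeff n - p.coeff (n - 2 * k)) * p.coeff n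
        = p.coeff (n - k) ^ 2 - p.coeff (n - 2 * k) * p.coeff n := by
      field_simp
    calc Bt * An = ‖((p.coeff (n - k) ^ 2 / p.coeff n - p.coeff (n - 2 * k))
          * p.coeff n)‖ := (norm_mul _ _).symm
      _ = ‖(p.coeff (n - k) ^ 2 - p.coeff (n - 2 * k) * p.coeff n)‖ := by rw [e]
      _ ≤ ‖(p.coeff (n - k) ^ 2)‖ + ‖(p.coeff (n - 2 * k) * p.coeff n)‖ :=
          norm_sub_le _ _
      _ = Ak ^ 2 + A2 * An := by rw [norm_pow, norm_mul]
  -- main estimate: cauchyFun q at y is nonnegative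
  have hmain : ∑ j ∈ range (n + 2 * k), ‖(q.coeff j)‖ * y ^ j
      ≤ (An * An) * y ^ (n + 2 * k) := by
    rw [hsplit]
    set u := y ^ k with hu
    have hupos : 0 < u := pow_pos hy k
    set v := y ^ (n - 2 * k) with hv
    have hvpos : 0 < v := pow_pos hy _
    have ey2k : y ^ (2 * k) = u ^ 2 := by rw [hu, ← pow_mul]; ring_nf
    have eynk : y ^ (n - k) = v * u := by rw [hu, hv, ← pow_add]; congr 1; omega
    have eyn : y ^ n = v * u ^ 2 := by rw [hu, hv, ← pow_mul, ← pow_add]; congr 1; omega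
    have eyN : y ^ (n + 2 * k) = v * u ^ 4 := by
      rw [hu, hv, ← pow_mul, ← pow_add]; congr 1; omega
    rw [hre2, hre1] at hbound
    rw [ey2k] at hbound
    rw [eynk, eyn] at hD2 hD1
    rw [eyn] at hS
    rw [hS] at hbound
    rw [eyN]
    set T2 := ∑ i ∈ range (n - 2 * k), ‖(p.coeff i)‖ * y ^ i with hT2
    set T1 := ∑ i ∈ range (n - k), ‖(p.coeff i)‖ * y ^ i with hT1
    have hAk0 : 0 ≤ Ak := norm_nonneg _
    have hA20 : 0 ≤ A2 := norm_nonneg _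
    have hBt0 : 0 ≤ Bt := norm_nonneg _
    have s1 : An * (u ^ 2 * T2) ≤ An * (u ^ 2 * (An * (v * u ^ 2) - Ak * (v * u) - A2 * v)) := by
      apply mul_le_mul_of_nonneg_left _ hAnpos.le
      apply mul_le_mul_of_nonneg_left _ (by positivity)
      linarith
    have s2 : Ak * (u * T1) ≤ Ak * (u * (An * (v * u ^ 2) - Ak * (v * u))) := by
      apply mul_le_mul_of_nonneg_left _ hAk0
      apply mul_le_mul_of_nonneg_left _ hupos.le
      linarith
    have s3 : Bt * (An * (v * u ^ 2)) ≤ (Ak ^ 2 + A2 * An) * (v * u ^ 2) := by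
      calc Bt * (An * (v * u ^ 2)) = (Bt * An) * (v * u ^ 2) := by ring
        _ ≤ (Ak ^ 2 + A2 * An) * (v * u ^ 2) :=
            mul_le_mul_of_nonneg_right hBt (by positivity)
    calc ∑ j ∈ range n, ‖(q.coeff j)‖ * y ^ j
        ≤ An * (u ^ 2 * T2) + Ak * (u * T1) + Bt * (An * (v * u ^ 2)) := hbound
      _ ≤ An * (u ^ 2 * (An * (v * u ^ 2) - Ak * (v * u) - A2 * v))
          + Ak * (u * (An * (v * u ^ 2) - Ak * (v * u)))
          + (Ak ^ 2 + A2 * An) * (v * u ^ 2) := by linarith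
      _ = An * An * (v * u ^ 4) := by ring
  -- the root equation for q
  simp only [cauchyFun, hqdeg, hqlead, norm_mul] at hxroot
  have hxe : (An * An) * x ^ (n + 2 * k)
      = ∑ j ∈ range (n + 2 * k), ‖(q.coeff j)‖ * x ^ j := by
    rw [hAn]; linarith
  exact key_mono (An * An) (fun j => ‖(q.coeff j)‖) (n + 2 * k)
    (by positivity) (fun j => norm_nonneg _) x y hx hy hxe hmain
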